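/- For all reals a, b, c, d, all 1 ≤ k, l ≤ N, and every x ∈ ℤ, the series ∑_{y∈ℤ} T_{c,d}(x,y) · F_{k,l}(y,a,b) converges absolutely, and its sum equals F_{k,l}(x, a+c, b+d). -/

import Mathlib

open Complex MeasureTheory
open scoped Real

/-- `F N v k l x a b r` is the contour integral
`(1/(2πi)) ∮_{|z|=r} z^{x−1} e^{bz + a/z}
  (∏_{i=1}^{k−1} (1 − v_{N+1−i} z)) / (∏_{j=1}^{l−1} (1 − v_{N+1−j} z)) dz`. -/
noncomputable def F (N : ℕ) (v : ℕ → ℝ) (k l : ℕ) (x : ℤ) (a b r : ℝ) : ℂ :=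
  (2 * (Real.pi : ℂ) * Complex.I)⁻¹ *
    ∮ z in C(0, r), z ^ (x - 1) * Complex.exp ((b : ℂ) * z + (a : ℂ) / z) *
      (∏ i ∈ Finset.range (k - 1), (1 - (v (N - i) : ℂ) * z)) /
      ∏ j ∈ Finset.range (l - 1), (1 - (v (N - j) : ℂ) * z)

/-- `T_{c,d}(x,y) = (1/(2πi)) ∮_{|w|=r'} w^{x−y−1} e^{c/w + dw} dw`. -/
noncomputable def T (c d : ℝ) (x y : ℤ) (r' : ℝ) : ℂ :=
  (2 * (Real.pi : ℂ) * Complex.I)⁻¹ *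
    ∮ w in C(0, r'), w ^ (x - y - 1) * Complex.exp ((c : ℂ) / w + (d : ℂ) * w)

/-! ### Auxiliary material -/

open scoped Nat

/-- The `t`-th Laurent coefficient of `e^{dz}` : `d^t/t!` for `t ≥ 0`, else `0`. -/
noncomputable def Ecoef (d : ℝ) (t : ℤ) : ℂ :=
  if 0 ≤ t then (d : ℂ) ^ t.toNat / (t.toNat)! else 0

lemma hasSum_exp' (z : ℂ) : HasSum (fun n : ℕ => z ^ n / n !) (Complex.exp z) := by
  rw [Complex.exp_eq_exp_ℂ]
  exact NormedSpace.expSeries_div_hasSum_exp z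

lemma norm_sphere_eq {R : ℝ} {w : ℂ} (hw : w ∈ Metric.sphere (0:ℂ) R) : ‖w‖ = R := by
  simpa using mem_sphere_zero_iff_norm.mp hw

lemma ne_zero_of_sphere {R : ℝ} (hR : 0 < R) {w : ℂ} (hw : w ∈ Metric.sphere (0:ℂ) R) :
    w ≠ 0 := by
  intro h
  have := norm_sphere_eq hw
  rw [h] at this
  simp at this
  exact hR.ne this

/-- Interchange of a circle integral and a dominated sum. -/
lemma circleIntegral_tsum {ι : Type} [Countable ι] {R : ℝ} (hR : 0 < R)
    (f : ι → ℂ → ℂ) (hf : ∀ i, ContinuousOn (f i) (Metric.sphere (0:ℂ) R))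
    (B : ι → ℝ) (hB : Summable B)
    (hfB : ∀ i, ∀ z ∈ Metric.sphere (0:ℂ) R, ‖f i z‖ ≤ B i) :
    (∮ z in C(0, R), ∑' i, f i z) = ∑' i, ∮ z in C(0, R), f i z := by
  have hmem : ∀ θ : ℝ, circleMap 0 R θ ∈ Metric.sphere (0:ℂ) R :=
    circleMap_mem_sphere 0 hR.le
  set g : ι → ℝ → ℂ := fun i θ => (circleMap 0 R θ * Complex.I) • f i (circleMap 0 R θ) with hg
  have hcont : ∀ i, Continuous (g i) := fun i =>
    ((continuous_circleMap 0 R).mul continuous_const).smul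
      ((hf i).comp_continuous (continuous_circleMap 0 R) hmem)
  have hBnonneg : ∀ i, 0 ≤ B i := fun i => le_trans (norm_nonneg _) (hfB i _ (hmem 0))
  have hnorm : ∀ i θ, ‖g i θ‖ ≤ R * B i := by
    intro i θ
    rw [hg]
    simp only [norm_smul, norm_mul, Complex.norm_I, mul_one]
    have h1 : ‖circleMap 0 R θ‖ = R := norm_sphere_eq (hmem θ)
    rw [h1]
    exact mul_le_mul_of_nonneg_left (hfB i _ (hmem θ)) hR.le
  have h1 : (∮ z in C(0, R), ∑' i, f i z)
      = ∫ θ in Set.Ioc 0 (2 * π), ∑' i, g i θ := by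
    rw [circleIntegral, intervalIntegral.integral_of_le Real.two_pi_pos.le]
    refine MeasureTheory.integral_congr_ae (Filter.Eventually.of_forall fun θ => ?_)
    simp only [deriv_circleMap, hg, smul_eq_mul]
    exact (tsum_mul_left).symm
  have h2 : (∫ θ in Set.Ioc 0 (2 * π), ∑' i, g i θ) = ∑' i, ∫ θ in Set.Ioc 0 (2 * π), g i θ := by
    refine MeasureTheory.integral_tsum (fun i => (hcont i).aestronglyMeasurable) ?_
    have hle : ∀ i, (∫⁻ θ in Set.Ioc 0 (2*π), ‖g i θ‖₊ ∂volume)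
        ≤ ENNReal.ofReal (2*π) * ENNReal.ofReal (R * B i) := by
      intro i
      calc (∫⁻ θ in Set.Ioc 0 (2*π), ‖g i θ‖₊ ∂volume)
          ≤ ∫⁻ _ in Set.Ioc 0 (2*π), ENNReal.ofReal (R * B i) ∂volume := by
            refine lintegral_mono fun θ => ?_
            rw [← ENNReal.ofReal_coe_nnreal, coe_nnnorm]
            exact ENNReal.ofReal_le_ofReal (hnorm i θ)
        _ = volume (Set.Ioc (0:ℝ) (2*π)) * ENNReal.ofReal (R * B i) := by
            rw [MeasureTheory.setLIntegral_const, mul_comm]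
        _ = ENNReal.ofReal (2*π) * ENNReal.ofReal (R * B i) := by
            rw [Real.volume_Ioc, sub_zero]
    refine ne_top_of_le_ne_top ?_ (ENNReal.tsum_le_tsum hle)
    rw [ENNReal.tsum_mul_left]
    refine ENNReal.mul_ne_top ENNReal.ofReal_ne_top ?_
    rw [← ENNReal.ofReal_tsum_of_nonneg (fun i => mul_nonneg hR.le (hBnonneg i))
      (hB.mul_left R)]
    exact ENNReal.ofReal_ne_top
  rw [h1, h2]
  refine tsum_congr fun i => ?_
  rw [circleIntegral, intervalIntegral.integral_of_le Real.two_pi_pos.le]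
  refine MeasureTheory.integral_congr_ae (Filter.Eventually.of_forall fun θ => ?_)
  simp only [deriv_circleMap, hg]

lemma circleIntegral_const_mul (C : ℂ) (f : ℂ → ℂ) (c : ℂ) (R : ℝ) :
    (∮ z in C(c, R), C * f z) = C * ∮ z in C(c, R), f z := by
  simpa [smul_eq_mul] using circleIntegral.integral_smul C f c R

lemma circleIntegral_zpow {R : ℝ} (hR : 0 < R) (n : ℤ) :
    (∮ z in C(0, R), z ^ n) = if n = -1 then 2 * π * Complex.I else 0 := by
  split_ifs with h
  · subst h
    have := circleIntegral.integral_sub_inv_of_mem_ball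
      (Metric.mem_ball_self hR (x := (0:ℂ)))
    simpa [zpow_neg_one] using this
  · simpa using circleIntegral.integral_sub_zpow_of_ne h 0 0 R

lemma circleIntegral_zpow_exp {R : ℝ} (hR : 0 < R) (d : ℝ) (m : ℤ) :
    (∮ w in C(0, R), w ^ m * Complex.exp ((d:ℂ) * w))
      = 2 * π * Complex.I * Ecoef d (-m - 1) := by
  have hpt : ∀ w : ℂ, w ^ m * Complex.exp ((d:ℂ) * w)
      = ∑' n : ℕ, w ^ m * (((d:ℂ) * w) ^ n / n !) := fun w =>
    ((hasSum_exp' ((d:ℂ) * w)).mul_left (w ^ m)).tsum_eq.symm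
  have hcont : ∀ n : ℕ, ContinuousOn (fun w : ℂ => w ^ m * (((d:ℂ) * w) ^ n / n !))
      (Metric.sphere (0:ℂ) R) := by
    intro n
    apply ContinuousOn.mul
    · intro w hw
      exact (continuousAt_zpow₀ w m (Or.inl (ne_zero_of_sphere hR hw))).continuousWithinAt
    · exact Continuous.continuousOn (by continuity)
  have hBs : Summable (fun n : ℕ => R ^ m * ((|d| * R) ^ n / n !)) :=
    (Real.summable_pow_div_factorial (|d| * R)).mul_left _
  have hbound : ∀ n : ℕ, ∀ w ∈ Metric.sphere (0:ℂ) R,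
      ‖w ^ m * (((d:ℂ) * w) ^ n / n !)‖ ≤ R ^ m * ((|d| * R) ^ n / n !) := by
    intro n w hw
    have h1 : ‖w‖ = R := norm_sphere_eq hw
    have : ‖w ^ m * (((d:ℂ) * w) ^ n / n !)‖ = R ^ m * ((|d| * R) ^ n / n !) := by
      rw [norm_mul, norm_div, norm_pow, norm_mul, norm_zpow, h1]
      simp [Complex.norm_real, Real.norm_eq_abs]
    exact this.le
  simp only [hpt]
  rw [circleIntegral_tsum hR _ hcont _ hBs hbound]
  have hterm : ∀ n : ℕ, (∮ w in C(0,R), w ^ m * (((d:ℂ) * w) ^ n / n !))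
      = ((d:ℂ) ^ n / n !) * (if m + (n:ℤ) = -1 then 2 * π * Complex.I else 0) := by
    intro n
    have heq : Set.EqOn (fun w : ℂ => w ^ m * (((d:ℂ) * w) ^ n / n !))
        (fun w => ((d:ℂ) ^ n / n !) * w ^ (m + (n:ℤ))) (Metric.sphere (0:ℂ) R) := by
      intro w hw
      have hw0 : w ≠ 0 := ne_zero_of_sphere hR hw
      simp only
      rw [zpow_add₀ hw0, zpow_natCast, mul_pow]
      ring
    rw [circleIntegral.integral_congr hR.le heq, circleIntegral_const_mul,
      circleIntegral_zpow hR]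
  simp only [hterm]
  by_cases hcase : 0 ≤ -m - 1
  · rw [tsum_eq_single (-m - 1).toNat ?_]
    · rw [if_pos (by omega), Ecoef, if_pos hcase]
      ring
    · intro n hn
      rw [if_neg (by omega), mul_zero]
  · have hz : ∀ n : ℕ, ((d:ℂ) ^ n / n !) *
        (if m + (n:ℤ) = -1 then 2 * π * Complex.I else 0) = 0 := by
      intro n; rw [if_neg (by omega), mul_zero]
    simp only [hz]
    rw [tsum_zero, Ecoef, if_neg hcase, mul_zero]

lemma T_eq_tsum (c d : ℝ) (x y : ℤ) {R : ℝ} (hR : 0 < R) :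
    T c d x y R = ∑' m : ℕ, (c:ℂ) ^ m / m ! * Ecoef d (y - x + m) := by
  have h2pii : (2 * (π:ℂ) * Complex.I) ≠ 0 := by
    simp [Real.pi_ne_zero, Complex.I_ne_zero]
  set f : ℕ → ℂ → ℂ :=
    fun m w => ((c:ℂ) ^ m / m !) * (w ^ (x - y - 1 - m) * Complex.exp ((d:ℂ) * w)) with hf
  have heq : Set.EqOn (fun w : ℂ => w ^ (x - y - 1) * Complex.exp ((c:ℂ)/w + (d:ℂ)*w))
      (fun w => ∑' m : ℕ, f m w) (Metric.sphere (0:ℂ) R) := by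
    intro w hw
    have hw0 : w ≠ 0 := ne_zero_of_sphere hR hw
    have h1 : HasSum
        (fun m : ℕ => (w ^ (x - y - 1) * Complex.exp ((d:ℂ)*w)) * (((c:ℂ)/w) ^ m / m !))
        ((w ^ (x - y - 1) * Complex.exp ((d:ℂ)*w)) * Complex.exp ((c:ℂ)/w)) :=
      (hasSum_exp' ((c:ℂ)/w)).mul_left _
    have h2 : ∀ m : ℕ, (w ^ (x - y - 1) * Complex.exp ((d:ℂ)*w)) * (((c:ℂ)/w) ^ m / m !)
        = f m w := by
      intro m
      rw [hf]
      simp only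
      rw [div_pow, zpow_sub₀ hw0 (x - y - 1) (m:ℤ), zpow_natCast w m]
      have hwm : w ^ m ≠ 0 := pow_ne_zero _ hw0
      field_simp
    simp only
    calc w ^ (x-y-1) * Complex.exp ((c:ℂ)/w + (d:ℂ)*w)
        = (w ^ (x-y-1) * Complex.exp ((d:ℂ)*w)) * Complex.exp ((c:ℂ)/w) := by
          rw [Complex.exp_add]; ring
      _ = ∑' m : ℕ, (w ^ (x-y-1) * Complex.exp ((d:ℂ)*w)) * (((c:ℂ)/w) ^ m / m !) :=
          h1.tsum_eq.symm
      _ = ∑' m : ℕ, f m w := tsum_congr h2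
  have hcont : ∀ m : ℕ, ContinuousOn (f m) (Metric.sphere (0:ℂ) R) := by
    intro m
    refine continuousOn_const.mul (ContinuousOn.mul ?_ (Continuous.continuousOn (by continuity)))
    intro w hw
    exact (continuousAt_zpow₀ w _ (Or.inl (ne_zero_of_sphere hR hw))).continuousWithinAt
  set B : ℕ → ℝ := fun m => (R ^ (x - y - 1) * Real.exp (|d| * R)) * ((|c| / R) ^ m / m !)
    with hBdef
  have hBsum : Summable B := (Real.summable_pow_div_factorial (|c| / R)).mul_left _
  have hbound : ∀ m : ℕ, ∀ w ∈ Metric.sphere (0:ℂ) R, ‖f m w‖ ≤ B m := by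
    intro m w hw
    have h1 : ‖w‖ = R := norm_sphere_eq hw
    have hnorm : ‖f m w‖
        = (|c| ^ m / m !) * (R ^ (x - y - 1 - m) * ‖Complex.exp ((d:ℂ)*w)‖) := by
      rw [hf]; simp only
      rw [norm_mul, norm_mul, norm_div, norm_pow, norm_zpow, h1]
      simp [Complex.norm_real, Real.norm_eq_abs]
    have hexp : ‖Complex.exp ((d:ℂ)*w)‖ ≤ Real.exp (|d| * R) := by
      rw [Complex.norm_exp]
      apply Real.exp_le_exp.mpr
      calc ((d:ℂ)*w).re ≤ ‖(d:ℂ)*w‖ := Complex.re_le_norm _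
        _ = |d| * R := by
            rw [norm_mul, Complex.norm_real, Real.norm_eq_abs, h1]
    have hcoef : (|c| ^ m / m !) * R ^ (x - y - 1 - m)
        = R ^ (x - y - 1) * ((|c| / R) ^ m / m !) := by
      rw [zpow_sub₀ hR.ne', zpow_natCast, div_pow]
      have hRm : R ^ m ≠ 0 := pow_ne_zero _ hR.ne'
      field_simp
    calc ‖f m w‖ = (|c| ^ m / m !) * (R ^ (x - y - 1 - m) * ‖Complex.exp ((d:ℂ)*w)‖) := hnorm
      _ ≤ (|c| ^ m / m !) * (R ^ (x - y - 1 - m) * Real.exp (|d| * R)) := by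
          refine mul_le_mul_of_nonneg_left
            (mul_le_mul_of_nonneg_left hexp (zpow_nonneg hR.le _)) (by positivity)
      _ = ((|c| ^ m / m !) * R ^ (x - y - 1 - m)) * Real.exp (|d| * R) := by ring
      _ = B m := by rw [hcoef, hBdef]; ring
  have key := circleIntegral_tsum hR f hcont B hBsum hbound
  rw [T, circleIntegral.integral_congr hR.le heq, key, ← tsum_mul_left]
  refine tsum_congr fun m => ?_
  rw [hf]
  simp only
  rw [circleIntegral_const_mul, circleIntegral_zpow_exp hR d (x - y - 1 - m)]
  have harg : -(x - y - 1 - (m:ℤ)) - 1 = y - x + m := by ring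
  rw [harg]
  calc (2 * (π:ℂ) * Complex.I)⁻¹ * ((c:ℂ) ^ m / m ! * (2 * π * Complex.I * Ecoef d (y - x + m)))
      = ((2 * (π:ℂ) * Complex.I)⁻¹ * (2 * (π:ℂ) * Complex.I))
          * ((c:ℂ) ^ m / m ! * Ecoef d (y - x + m)) := by ring
    _ = (c:ℂ) ^ m / m ! * Ecoef d (y - x + m) := by rw [inv_mul_cancel₀ h2pii, one_mul]

lemma T_norm_le (c d : ℝ) (x y : ℤ) {R ρ : ℝ} (hR : 0 < R) (hρ : 0 < ρ) :
    ‖T c d x y R‖ ≤ Real.exp (|c| / ρ + |d| * ρ) * ρ ^ (x - y) := by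
  have hTeq : T c d x y R = T c d x y ρ := by
    rw [T_eq_tsum c d x y hR, T_eq_tsum c d x y hρ]
  rw [hTeq, T, norm_mul]
  have hnorm2pii : ‖(2 * (π:ℂ) * Complex.I)⁻¹‖ = (2 * π)⁻¹ := by
    simp [Real.pi_pos.le]
  rw [hnorm2pii]
  have hb : ∀ w ∈ Metric.sphere (0:ℂ) ρ,
      ‖w ^ (x - y - 1) * Complex.exp ((c:ℂ)/w + (d:ℂ)*w)‖
        ≤ ρ ^ (x - y - 1) * Real.exp (|c| / ρ + |d| * ρ) := by
    intro w hw
    have h1 : ‖w‖ = ρ := norm_sphere_eq hw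
    rw [norm_mul, norm_zpow, h1]
    refine mul_le_mul_of_nonneg_left ?_ (zpow_nonneg hρ.le _)
    rw [Complex.norm_exp]
    apply Real.exp_le_exp.mpr
    have habsw : ‖w‖ = ρ := h1
    calc ((c:ℂ)/w + (d:ℂ)*w).re ≤ ‖(c:ℂ)/w + (d:ℂ)*w‖ := Complex.re_le_norm _
      _ ≤ ‖(c:ℂ)/w‖ + ‖(d:ℂ)*w‖ := norm_add_le _ _
      _ = |c| / ρ + |d| * ρ := by
          rw [norm_div, norm_mul, Complex.norm_real, Complex.norm_real, Real.norm_eq_abs,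
            Real.norm_eq_abs, habsw]
  have hint := circleIntegral.norm_integral_le_of_norm_le_const hρ.le hb
  calc (2 * π)⁻¹ * ‖∮ w in C(0, ρ), w ^ (x - y - 1) * Complex.exp ((c:ℂ)/w + (d:ℂ)*w)‖
      ≤ (2 * π)⁻¹ * (2 * π * ρ * (ρ ^ (x - y - 1) * Real.exp (|c| / ρ + |d| * ρ))) :=
        mul_le_mul_of_nonneg_left hint (by positivity)
    _ = Real.exp (|c| / ρ + |d| * ρ) * ρ ^ (x - y) := by
        rw [show x - y = (x - y - 1) + 1 by ring, zpow_add_one₀ hρ.ne']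
        field_simp [Real.pi_ne_zero]
        ring

lemma hasSum_T_zpow (c d : ℝ) (x : ℤ) {R' : ℝ} (hR' : 0 < R') {z : ℂ} (hz : z ≠ 0) :
    HasSum (fun y : ℤ => T c d x y R' * z ^ (y - 1))
      (z ^ (x - 1) * Complex.exp ((c:ℂ)/z + (d:ℂ)*z)) := by
  have h1 : HasSum (fun m : ℕ => ((c:ℂ)/z) ^ m / m !) (Complex.exp ((c:ℂ)/z)) := hasSum_exp' _
  have h2 : HasSum (fun n : ℕ => ((d:ℂ)*z) ^ n / n !) (Complex.exp ((d:ℂ)*z)) := hasSum_exp' _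
  have hprod : Summable
      (fun p : ℕ × ℕ => (((c:ℂ)/z) ^ p.1 / p.1 !) * (((d:ℂ)*z) ^ p.2 / p.2 !)) :=
    (Summable.mul_norm (NormedSpace.norm_expSeries_div_summable ((c:ℂ)/z))
      (NormedSpace.norm_expSeries_div_summable ((d:ℂ)*z))).of_norm
  have hu : HasSum
      (fun p : ℕ × ℕ => z ^ (x-1) * ((((c:ℂ)/z) ^ p.1 / p.1 !) * (((d:ℂ)*z) ^ p.2 / p.2 !)))
      (z ^ (x-1) * (Complex.exp ((c:ℂ)/z) * Complex.exp ((d:ℂ)*z))) :=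
    (h1.mul h2 hprod).mul_left _
  set W : ℤ × ℕ → ℂ := fun q =>
    if 0 ≤ (q.2:ℤ) - q.1 then
      z ^ (x-1) * ((((c:ℂ)/z) ^ ((q.2:ℤ) - q.1).toNat / (((q.2:ℤ) - q.1).toNat)!)
        * (((d:ℂ)*z) ^ q.2 / q.2 !))
    else 0 with hW
  have hinj : Function.Injective (fun p : ℕ × ℕ => (((p.2:ℤ) - p.1, p.2) : ℤ × ℕ)) := by
    intro p q h
    simp only [Prod.mk.injEq] at h
    obtain ⟨ha, hb⟩ := h
    have : p.1 = q.1 := by omega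
    exact Prod.ext this hb
  have hWzero : ∀ q : ℤ × ℕ,
      q ∉ Set.range (fun p : ℕ × ℕ => (((p.2:ℤ) - p.1, p.2) : ℤ × ℕ)) → W q = 0 := by
    rintro ⟨j, n⟩ hq
    rw [hW]
    simp only
    refine if_neg fun hcon => hq ?_
    refine ⟨(((n:ℤ) - j).toNat, n), ?_⟩
    simp only [Prod.mk.injEq]
    exact ⟨by omega, by trivial⟩
  have hWcomp : ∀ p : ℕ × ℕ,
      W ((p.2:ℤ) - p.1, p.2)
        = z ^ (x-1) * ((((c:ℂ)/z) ^ p.1 / p.1 !) * (((d:ℂ)*z) ^ p.2 / p.2 !)) := by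
    intro p
    rw [hW]
    simp only
    rw [if_pos (by omega)]
    have hm : ((p.2:ℤ) - ((p.2:ℤ) - p.1)).toNat = p.1 := by omega
    rw [hm]
  have hWsum : HasSum W (z ^ (x-1) * (Complex.exp ((c:ℂ)/z) * Complex.exp ((d:ℂ)*z))) := by
    rw [← Function.Injective.hasSum_iff hinj hWzero]
    exact hu.congr_fun fun p => hWcomp p
  have hfib : ∀ j : ℤ, HasSum (fun n : ℕ => W (j, n))
      (T c d x (x + j) R' * z ^ (x + j - 1)) := by
    intro j
    have hs : Summable (fun n : ℕ => W (j, n)) := hWsum.summable.prod_factor j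
    set V : ℤ → ℂ := fun t =>
      if 0 ≤ t ∧ 0 ≤ t + j then
        ((c:ℂ) ^ t.toNat / (t.toNat)! * Ecoef d (j + t)) * z ^ (x + j - 1)
      else 0 with hV
    have hA : ∀ n : ℕ, W (j, n) = V ((n:ℤ) - j) := by
      intro n
      rw [hW, hV]
      simp only
      by_cases hpos : 0 ≤ (n:ℤ) - j
      · rw [if_pos hpos, if_pos ⟨hpos, by omega⟩]
        rw [show j + ((n:ℤ) - j) = (n:ℤ) by ring]
        rw [Ecoef, if_pos (by omega : (0:ℤ) ≤ (n:ℤ))]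
        rw [show ((n:ℤ)).toNat = n by omega]
        set m := ((n:ℤ) - j).toNat with hm
        have hm' : (m:ℤ) = (n:ℤ) - j := Int.toNat_of_nonneg hpos
        have hz1 : z ^ (x + j - 1) = z ^ (x - 1) * (z ^ n * (z ^ m)⁻¹) := by
          rw [show x + j - 1 = (x - 1) + ((n:ℤ) - (m:ℤ)) by omega,
            zpow_add₀ hz, zpow_sub₀ hz (n:ℤ) (m:ℤ), zpow_natCast z n, zpow_natCast z m]
          rw [div_eq_mul_inv]
        rw [hz1, div_pow, mul_pow]
        have hzm : z ^ m ≠ 0 := pow_ne_zero _ hz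
        have hzn : z ^ n ≠ 0 := pow_ne_zero _ hz
        field_simp
      · rw [if_neg hpos, if_neg (fun hcon => hpos hcon.1)]
    have hB : ∑' n : ℕ, W (j, n) = ∑' t : ℤ, V t := by
      rw [tsum_congr hA]
      refine Function.Injective.tsum_eq (g := fun n : ℕ => (n:ℤ) - j)
        (fun n1 n2 h => by dsimp only at h; omega) ?_
      intro t ht
      have hc : 0 ≤ t ∧ 0 ≤ t + j := by
        by_contra hcon
        refine ht ?_
        rw [hV]
        simp only
        rw [if_neg hcon]
      exact ⟨(t + j).toNat, show (((t + j).toNat : ℤ)) - j = t by omega⟩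
    have hC : ∑' m : ℕ, V (m:ℤ) = ∑' t : ℤ, V t := by
      refine Function.Injective.tsum_eq (g := fun m : ℕ => (m:ℤ))
        (fun a b h => by dsimp only at h; omega) ?_
      intro t ht
      have hc : 0 ≤ t := by
        by_contra hcon
        refine ht ?_
        rw [hV]
        simp only
        rw [if_neg (fun hx => hcon hx.1)]
      exact ⟨t.toNat, show ((t.toNat : ℤ)) = t by omega⟩
    have hD : ∀ m : ℕ, V (m:ℤ)
        = ((c:ℂ) ^ m / m ! * Ecoef d (j + m)) * z ^ (x + j - 1) := by
      intro m
      rw [hV]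
      simp only
      by_cases hpos : 0 ≤ (m:ℤ) + j
      · rw [if_pos ⟨by omega, hpos⟩]
        rw [show ((m:ℤ)).toNat = m by omega]
      · rw [if_neg (fun hx => hpos hx.2), Ecoef, if_neg (by omega)]
        ring
    have hval : ∑' n : ℕ, W (j, n) = T c d x (x + j) R' * z ^ (x + j - 1) := by
      calc ∑' n : ℕ, W (j, n) = ∑' t : ℤ, V t := hB
        _ = ∑' m : ℕ, V (m:ℤ) := hC.symm
        _ = ∑' m : ℕ, ((c:ℂ) ^ m / m ! * Ecoef d (j + m)) * z ^ (x + j - 1) := tsum_congr hD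
        _ = (∑' m : ℕ, (c:ℂ) ^ m / m ! * Ecoef d (j + m)) * z ^ (x + j - 1) := tsum_mul_right
        _ = T c d x (x + j) R' * z ^ (x + j - 1) := by
            rw [T_eq_tsum c d x (x + j) hR']
            have harg : ∀ m : ℕ, x + j - x + (m:ℤ) = j + m := fun m => by ring
            simp only [harg]
    exact hval ▸ hs.hasSum
  have htot : HasSum (fun j : ℤ => T c d x (x + j) R' * z ^ (x + j - 1))
      (z ^ (x-1) * (Complex.exp ((c:ℂ)/z) * Complex.exp ((d:ℂ)*z))) :=
    hWsum.prod_fiberwise hfib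
  have hcomp : ∀ j : ℤ, ((fun y : ℤ => T c d x y R' * z ^ (y - 1)) ∘ (Equiv.addLeft x)) j
      = T c d x (x + j) R' * z ^ (x + j - 1) := fun j => by
    simp [Equiv.coe_addLeft]
  have hfinal := (Equiv.addLeft x).hasSum_iff.mp (HasSum.congr_fun htot fun j => hcomp j)
  rwa [← Complex.exp_add] at hfinal

lemma T_summable (c d : ℝ) (x : ℤ) {R r : ℝ} (hR : 0 < R) (hr : 0 < r) :
    Summable (fun y : ℤ => ‖T c d x y R‖ * r ^ y) := by
  apply Summable.of_nat_of_neg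
  · have h2r : (0:ℝ) < 2 * r := by positivity
    have hb : ∀ n : ℕ, ‖T c d x (n:ℤ) R‖ * r ^ (n:ℤ)
        ≤ (Real.exp (|c| / (2*r) + |d| * (2*r)) * (2*r) ^ x) * (1/2 : ℝ) ^ n := by
      intro n
      have h := T_norm_le c d x (n:ℤ) hR h2r
      calc ‖T c d x (n:ℤ) R‖ * r ^ (n:ℤ)
          ≤ (Real.exp (|c| / (2*r) + |d| * (2*r)) * (2*r) ^ (x - n)) * r ^ (n:ℤ) :=
            mul_le_mul_of_nonneg_right h (zpow_nonneg hr.le _)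
        _ = (Real.exp (|c| / (2*r) + |d| * (2*r)) * (2*r) ^ x) * (1/2 : ℝ) ^ n := by
            rw [zpow_sub₀ h2r.ne', zpow_natCast, zpow_natCast, mul_pow, div_pow, one_pow]
            have : (2:ℝ) ^ n * r ^ n ≠ 0 := by positivity
            field_simp
    refine Summable.of_nonneg_of_le (fun n => by positivity) hb ?_
    exact (summable_geometric_of_lt_one (by norm_num) (by norm_num)).mul_left _
  · have hr2 : (0:ℝ) < r / 2 := by positivity
    have hb : ∀ n : ℕ, ‖T c d x (-(n:ℤ)) R‖ * r ^ (-(n:ℤ))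
        ≤ (Real.exp (|c| / (r/2) + |d| * (r/2)) * (r/2) ^ x) * (1/2 : ℝ) ^ n := by
      intro n
      have h := T_norm_le c d x (-(n:ℤ)) hR hr2
      calc ‖T c d x (-(n:ℤ)) R‖ * r ^ (-(n:ℤ))
          ≤ (Real.exp (|c| / (r/2) + |d| * (r/2)) * (r/2) ^ (x - -(n:ℤ))) * r ^ (-(n:ℤ)) :=
            mul_le_mul_of_nonneg_right h (zpow_nonneg hr.le _)
        _ = (Real.exp (|c| / (r/2) + |d| * (r/2)) * (r/2) ^ x) * (1/2 : ℝ) ^ n := by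
            rw [show x - -(n:ℤ) = x + n by ring, zpow_add₀ hr2.ne', zpow_neg,
              zpow_natCast, zpow_natCast, div_pow, div_pow, one_pow]
            have h1 : r ^ n ≠ 0 := by positivity
            have h2 : (2:ℝ) ^ n ≠ 0 := by positivity
            field_simp
    refine Summable.of_nonneg_of_le (fun n => by positivity) hb ?_
    exact (summable_geometric_of_lt_one (by norm_num) (by norm_num)).mul_left _

/-- `∑_{y∈ℤ} T_{c,d}(x,y) F_{k,l}(y,a,b) = F_{k,l}(x,a+c,b+d)`,
the series converging absolutely. -/
theorem stmt15 (N : ℕ) (hN : 1 ≤ N) (v : ℕ → ℝ)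
    (hv : ∀ i, 1 ≤ i → i ≤ N → 0 < v i)
    (r : ℝ) (hr : 0 < r) (hrv : ∀ j, 1 ≤ j → j ≤ N → r < 1 / v j)
    (r' : ℝ) (hr' : 0 < r')
    (a b c d : ℝ) (k l : ℕ) (hk1 : 1 ≤ k) (hkN : k ≤ N) (hl1 : 1 ≤ l) (hlN : l ≤ N)
    (x : ℤ) :
    Summable (fun y : ℤ => ‖T c d x y r' * F N v k l y a b r‖) ∧
    ∑' y : ℤ, T c d x y r' * F N v k l y a b r
      = F N v k l x (a + c) (b + d) r := by
  set P : ℂ → ℂ := fun z => ∏ i ∈ Finset.range (k - 1), (1 - (v (N - i) : ℂ) * z) with hP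
  set Q : ℂ → ℂ := fun z => ∏ j ∈ Finset.range (l - 1), (1 - (v (N - j) : ℂ) * z) with hQ
  have hQne : ∀ z ∈ Metric.sphere (0:ℂ) r, Q z ≠ 0 := by
    intro z hzs
    rw [hQ]
    simp only
    rw [Finset.prod_ne_zero_iff]
    intro j hj
    have hjl : j < l - 1 := Finset.mem_range.mp hj
    have hNj1 : 1 ≤ N - j := by omega
    have hNjN : N - j ≤ N := by omega
    have hvpos := hv _ hNj1 hNjN
    have hvr : v (N - j) * r < 1 := by
      have h := hrv _ hNj1 hNjN
      rw [lt_div_iff₀ hvpos] at h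
      linarith
    intro hcon
    have h1 : (v (N - j) : ℂ) * z = 1 := by linear_combination -hcon
    have hnorm : ‖(v (N - j) : ℂ) * z‖ = v (N - j) * r := by
      rw [norm_mul, Complex.norm_real, Real.norm_eq_abs, abs_of_pos hvpos, norm_sphere_eq hzs]
    rw [h1] at hnorm
    simp at hnorm
    linarith
  set G : ℂ → ℂ := fun z => Complex.exp ((b:ℂ) * z + (a:ℂ) / z) * P z / Q z with hG
  have hPcont : Continuous P := by
    rw [hP]
    exact continuous_finset_prod _ fun i _ => by continuity
  have hQcont : Continuous Q := by
    rw [hQ]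
    exact continuous_finset_prod _ fun i _ => by continuity
  have hGcont : ContinuousOn G (Metric.sphere (0:ℂ) r) := by
    apply ContinuousOn.div
    · apply ContinuousOn.mul
      · apply Complex.continuous_exp.comp_continuousOn
        apply ContinuousOn.add
        · exact (continuous_const.mul continuous_id).continuousOn
        · exact continuousOn_const.div continuousOn_id fun z hzs => ne_zero_of_sphere hr hzs
      · exact hPcont.continuousOn
    · exact hQcont.continuousOn
    · exact hQne
  obtain ⟨C, hC⟩ := (isCompact_sphere (0:ℂ) r).exists_bound_of_continuousOn hGcont
  have hC0 : 0 ≤ C :=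
    le_trans (norm_nonneg _) (hC _ (circleMap_mem_sphere (0:ℂ) hr.le 0))
  have hFdef : ∀ (y : ℤ) (a' b' : ℝ), F N v k l y a' b' r
      = (2 * (π:ℂ) * Complex.I)⁻¹ *
        ∮ z in C(0, r), z ^ (y - 1) * Complex.exp ((b':ℂ) * z + (a':ℂ) / z) * P z / Q z :=
    fun _ _ _ => rfl
  have hIeq : ∀ (y : ℤ), ∀ z ∈ Metric.sphere (0:ℂ) r,
      z ^ (y - 1) * Complex.exp ((b:ℂ) * z + (a:ℂ) / z) * P z / Q z
        = z ^ (y - 1) * G z := by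
    intro y z hzs
    rw [hG]
    simp only
    ring
  have hnorm2pii : ‖(2 * (π:ℂ) * Complex.I)⁻¹‖ = (2 * π)⁻¹ := by
    simp [Real.pi_pos.le]
  have hFle : ∀ y : ℤ, ‖F N v k l y a b r‖ ≤ r ^ y * C := by
    intro y
    rw [hFdef y a b, norm_mul, hnorm2pii]
    have hb2 : ∀ z ∈ Metric.sphere (0:ℂ) r,
        ‖z ^ (y - 1) * Complex.exp ((b:ℂ) * z + (a:ℂ) / z) * P z / Q z‖
          ≤ r ^ (y - 1) * C := by
      intro z hzs
      rw [hIeq y z hzs, norm_mul, norm_zpow, norm_sphere_eq hzs]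
      exact mul_le_mul_of_nonneg_left (hC z hzs) (zpow_nonneg hr.le _)
    have hint := circleIntegral.norm_integral_le_of_norm_le_const hr.le hb2
    calc (2 * π)⁻¹ *
          ‖∮ z in C(0, r), z ^ (y - 1) * Complex.exp ((b:ℂ) * z + (a:ℂ) / z) * P z / Q z‖
        ≤ (2 * π)⁻¹ * (2 * π * r * (r ^ (y - 1) * C)) :=
          mul_le_mul_of_nonneg_left hint (by positivity)
      _ = r ^ y * C := by
          rw [zpow_sub_one₀ hr.ne' y]
          field_simp [Real.pi_ne_zero]
  have hTsum := (T_summable c d x hr' hr).mul_right C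
  have hsum1 : Summable (fun y : ℤ => ‖T c d x y r' * F N v k l y a b r‖) := by
    refine Summable.of_nonneg_of_le (fun y => norm_nonneg _) (fun y => ?_) hTsum
    rw [norm_mul]
    calc ‖T c d x y r'‖ * ‖F N v k l y a b r‖
        ≤ ‖T c d x y r'‖ * (r ^ y * C) :=
          mul_le_mul_of_nonneg_left (hFle y) (norm_nonneg _)
      _ = ‖T c d x y r'‖ * r ^ y * C := by ring
  refine ⟨hsum1, ?_⟩
  set f : ℤ → ℂ → ℂ := fun y z => T c d x y r' * z ^ (y - 1) * G z with hfd
  have hfcont : ∀ y : ℤ, ContinuousOn (f y) (Metric.sphere (0:ℂ) r) := by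
    intro y
    refine ContinuousOn.mul (ContinuousOn.mul continuousOn_const ?_) hGcont
    intro z hzs
    exact (continuousAt_zpow₀ z _ (Or.inl (ne_zero_of_sphere hr hzs))).continuousWithinAt
  set B : ℤ → ℝ := fun y => ‖T c d x y r'‖ * r ^ (y - 1) * C with hBd
  have hBsum : Summable B := by
    have h1 : Summable (fun y : ℤ => (‖T c d x y r'‖ * r ^ y) * (r⁻¹ * C)) :=
      (T_summable c d x hr' hr).mul_right _
    refine h1.congr fun y => ?_
    rw [hBd]
    simp only
    rw [zpow_sub_one₀ hr.ne' y]
    ring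
  have hfB : ∀ y : ℤ, ∀ z ∈ Metric.sphere (0:ℂ) r, ‖f y z‖ ≤ B y := by
    intro y z hzs
    rw [hfd, hBd]
    simp only
    rw [norm_mul, norm_mul, norm_zpow, norm_sphere_eq hzs]
    refine mul_le_mul_of_nonneg_left (hC z hzs) ?_
    positivity
  have hyint : ∀ y : ℤ, T c d x y r' * F N v k l y a b r
      = (2 * (π:ℂ) * Complex.I)⁻¹ * ∮ z in C(0, r), f y z := by
    intro y
    rw [hFdef y a b, ← mul_assoc, mul_comm (T c d x y r') _, mul_assoc]
    congr 1
    rw [← circleIntegral_const_mul]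
    refine circleIntegral.integral_congr hr.le fun z hzs => ?_
    rw [hfd]
    simp only
    rw [hIeq y z hzs]
    ring
  have hpt : ∀ z ∈ Metric.sphere (0:ℂ) r, ∑' y : ℤ, f y z
      = z ^ (x - 1) * Complex.exp (((b + d : ℝ):ℂ) * z + ((a + c : ℝ):ℂ) / z) * P z / Q z := by
    intro z hzs
    have hz0 : z ≠ 0 := ne_zero_of_sphere hr hzs
    have h1 := (hasSum_T_zpow c d x hr' hz0).mul_right (G z)
    have h2 : ∑' y : ℤ, f y z
        = z ^ (x - 1) * Complex.exp ((c:ℂ)/z + (d:ℂ)*z) * G z := h1.tsum_eq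
    rw [h2, hG]
    simp only
    have hexp : Complex.exp ((c:ℂ)/z + (d:ℂ)*z) * Complex.exp ((b:ℂ)*z + (a:ℂ)/z)
        = Complex.exp (((b + d : ℝ):ℂ) * z + ((a + c : ℝ):ℂ) / z) := by
      rw [← Complex.exp_add]
      congr 1
      push_cast
      ring
    calc z ^ (x - 1) * Complex.exp ((c:ℂ)/z + (d:ℂ)*z)
          * (Complex.exp ((b:ℂ)*z + (a:ℂ)/z) * P z / Q z)
        = (Complex.exp ((c:ℂ)/z + (d:ℂ)*z) * Complex.exp ((b:ℂ)*z + (a:ℂ)/z))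
            * z ^ (x - 1) * P z / Q z := by ring
      _ = z ^ (x - 1) * Complex.exp (((b + d : ℝ):ℂ) * z + ((a + c : ℝ):ℂ) / z)
            * P z / Q z := by rw [hexp]; ring
  calc ∑' y : ℤ, T c d x y r' * F N v k l y a b r
      = ∑' y : ℤ, (2 * (π:ℂ) * Complex.I)⁻¹ * ∮ z in C(0, r), f y z := tsum_congr hyint
    _ = (2 * (π:ℂ) * Complex.I)⁻¹ * ∑' y : ℤ, ∮ z in C(0, r), f y z := tsum_mul_left
    _ = (2 * (π:ℂ) * Complex.I)⁻¹ * ∮ z in C(0, r), ∑' y : ℤ, f y z := by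
        rw [circleIntegral_tsum hr f hfcont B hBsum hfB]
    _ = F N v k l x (a + c) (b + d) r := by
        rw [hFdef x (a + c) (b + d)]
        congr 1
        exact circleIntegral.integral_congr hr.le fun z hzs => hpt z hzs
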